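/- Under Assumption *, suppose (μ,Λ) is a spectral pair with 0 ∈ Λ, and let ν = ν_{>1}. Then for each γ ∈ [0,N_1) ∩ ℚ, the set P(γ) = {ω ∈ ℤ : γ + N_1ω ∈ Λ} is either empty or an orthogonal set of ν. -/

import Mathlib

open MeasureTheory Filter Topology Complex Polynomial

/-- The exponential function `e_l(x) = e^{-2πi l x}`. -/
noncomputable def expFun (l x : ℝ) : ℂ :=
  Complex.exp (((-2 * Real.pi * l * x : ℝ) : ℂ) * Complex.I)

/-- The Fourier transform `μ̂(ξ) = ∫ e^{-2πiξx} dμ(x)` of a measure on `ℝ`. -/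
noncomputable def ft (μ : Measure ℝ) (ξ : ℝ) : ℂ := ∫ x, expFun ξ x ∂μ

/-- `Λ` is an orthogonal (orthonormal) set for `μ`: the exponentials `e_λ`, `λ ∈ Λ`, form an
orthonormal family in `L²(μ)`. -/
def IsOrthoSet (μ : Measure ℝ) (Λ : Set ℝ) : Prop :=
  ∀ l₁ ∈ Λ, ∀ l₂ ∈ Λ,
    (∫ x, (starRingEnd ℂ) (expFun l₁ x) * expFun l₂ x ∂μ) = if l₁ = l₂ then 1 else 0

/-- `(μ, Λ)` is a spectral pair: the exponentials `{e_λ : λ ∈ Λ}` form an orthonormal family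
which is maximal (total) in `L²(μ)`, i.e. an orthonormal basis of `L²(μ)`. -/
def IsSpectralPair (μ : Measure ℝ) (Λ : Set ℝ) : Prop :=
  IsOrthoSet μ Λ ∧
  ∀ f : ℝ → ℂ, MemLp f 2 μ →
    (∀ l ∈ Λ, (∫ x, (starRingEnd ℂ) (expFun l x) * f x ∂μ) = 0) → f =ᵐ[μ] 0

/-- `μ` is a spectral measure: some countable `Λ ⊆ ℝ` is a spectrum of `μ`. -/
def IsSpectralMeasure (μ : Measure ℝ) : Prop :=
  ∃ Λ : Set ℝ, Λ.Countable ∧ IsSpectralPair μ Λ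

/-- The uniform probability measure `δ_A` on a finite set `A ⊆ ℝ`. -/
noncomputable def uniformD (A : Finset ℝ) : Measure ℝ :=
  (A.card : ENNReal)⁻¹ • ∑ a ∈ A, Measure.dirac a

/-- The measure `δ_{c⁻¹ B}` for a finite set `B ⊆ ℤ` and a scaling factor `c`. -/
noncomputable def scaledB (B : Finset ℤ) (c : ℝ) : Measure ℝ :=
  uniformD (B.image fun b : ℤ => (b : ℝ) / c)

/-- The finite convolutions `μ_k = δ_{N₁⁻¹B₁} ∗ δ_{(N₁N₂)⁻¹B₂} ∗ ⋯ ∗ δ_{(N₁⋯N_k)⁻¹B_k}`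
(the sequences are indexed starting from `k = 1`; `μ_0 = δ_0`). -/
noncomputable def partialConv (N : ℕ → ℕ) (B : ℕ → Finset ℤ) : ℕ → Measure ℝ
  | 0 => Measure.dirac 0
  | k + 1 =>
      MeasureTheory.Measure.conv (partialConv N B k)
        (scaledB (B (k + 1)) (∏ i ∈ Finset.Icc 1 (k + 1), (N i : ℝ)))

/-- `μ` is the infinite convolution of `{(N_k, B_k)}_{k=1}^∞`: it is a Borel probability
measure and the finite convolutions `μ_k` converge weakly to `μ`. -/
def IsInfiniteConv (N : ℕ → ℕ) (B : ℕ → Finset ℤ) (μ : Measure ℝ) : Prop :=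
  IsProbabilityMeasure μ ∧
    ∀ f : BoundedContinuousFunction ℝ ℝ,
      Tendsto (fun k => ∫ x, f x ∂(partialConv N B k)) atTop (𝓝 (∫ x, f x ∂μ))

/-- `ν` is the tail infinite convolution `ν_{>k} = δ_{N_{k+1}⁻¹B_{k+1}} ∗ ⋯`. -/
def IsNuGt (N : ℕ → ℕ) (B : ℕ → Finset ℤ) (k : ℕ) (ν : Measure ℝ) : Prop :=
  IsInfiniteConv (fun j => N (k + j)) (fun j => B (k + j)) ν

/-- A family of measures is tight. -/
def IsTightFamily {ι : Type*} (Φ : ι → Measure ℝ) : Prop :=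
  ∀ ε : ENNReal, 0 < ε → ∃ K : Set ℝ, IsCompact K ∧ ∀ i, 1 - ε < Φ i K

/-- `B` is a complete residue system modulo `M`: each residue class modulo `M` contains
exactly one element of `B`. -/
def IsCRS (B : Finset ℤ) (M : ℕ) : Prop :=
  ∀ r : ZMod M, ∃! b : ℤ, b ∈ B ∧ ((b : ZMod M) = r)

/-- `∑_{b ∈ B} x^{b - b⁎}` where `b⁎ = min B`, i.e. `x^{-b⁎} ∑_{b ∈ B} x^b`. -/
noncomputable def numerPoly (B : Finset ℤ) : Polynomial ℤ :=
  ∑ b ∈ B, Polynomial.X ^ (b - (WithTop.untopD 0 B.min)).toNat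

/-- `∑_{k=0}^{n-1} x^k`. -/
noncomputable def geomPoly (n : ℕ) : Polynomial ℤ :=
  ∑ k ∈ Finset.range n, Polynomial.X ^ k

/-- The character polynomial `f_B(x) = (∑_{b∈B} x^b)/(x^{b⁎} ∑_{k=0}^{#B-1} x^k)`,
obtained by dividing by the monic polynomial `∑_{k=0}^{#B-1} x^k`. -/
noncomputable def charPoly (B : Finset ℤ) : Polynomial ℤ :=
  numerPoly B /ₘ geomPoly B.card

/-- `B` (a complete residue system modulo `M`) satisfies the uniform discrete zero
condition: `Z(f_B ∘ e^{-2πix}) ⊆ {j/M : j ∈ ℤ ∖ Mℤ}`. -/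
def SatisfiesUDZ (B : Finset ℤ) (M : ℕ) : Prop :=
  {x : ℝ | Polynomial.aeval (expFun x 1) (charPoly B) = 0} ⊆
    {x : ℝ | ∃ j : ℤ, ¬ ((M : ℤ) ∣ j) ∧ x = (j : ℝ) / M}

/-- `M_B(ξ) = (1/#B) ∑_{b∈B} e^{-2πibξ}`, the Fourier transform of `δ_B`. -/
noncomputable def MB (B : Finset ℤ) (ξ : ℝ) : ℂ :=
  (B.card : ℂ)⁻¹ * ∑ b ∈ B, expFun (b : ℝ) ξ

/-- `Q_{μ,Λ}(ξ) = ∑_{λ ∈ Λ} |μ̂(ξ+λ)|²`. -/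
noncomputable def Qf (μ : Measure ℝ) (Λ : Set ℝ) (ξ : ℝ) : ℝ :=
  ∑' l : Λ, ‖ft μ (ξ + (l : ℝ))‖ ^ 2

/-- `P(γ) = {ω ∈ ℤ : γ + N₁ω ∈ Λ}`. -/
def Pset (Λ : Set ℝ) (N1 γ : ℝ) : Set ℤ := {ω : ℤ | γ + N1 * (ω : ℝ) ∈ Λ}

/-- The translated set `γ/N₁ + P(γ)`, viewed as a subset of `ℝ`. -/
def PsetT (Λ : Set ℝ) (N1 γ : ℝ) : Set ℝ :=
  {x : ℝ | ∃ ω : ℤ, x = γ / N1 + (ω : ℝ) ∧ γ + N1 * (ω : ℝ) ∈ Λ}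

/-- `Γ₀ = {0, N₁/M₁, 2N₁/M₁, …, (M₁-1)N₁/M₁}`. -/
def Gamma0 (N1 M1 : ℕ) : Set ℝ :=
  {x : ℝ | ∃ t : ℕ, t < M1 ∧ x = (t : ℝ) * ((N1 : ℝ) / (M1 : ℝ))}


section AuxStmt13

open MeasureTheory

lemma expFun_continuous (l : ℝ) : Continuous (expFun l) := by
  unfold expFun; fun_prop

lemma norm_expFun (l x : ℝ) : ‖expFun l x‖ = 1 := by
  simp [expFun, Complex.norm_exp]

lemma integrable_expFun (ρ : Measure ℝ) [IsFiniteMeasure ρ] (l : ℝ) :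
    Integrable (expFun l) ρ :=
  ⟨(expFun_continuous l).aestronglyMeasurable,
    HasFiniteIntegral.of_bounded (C := 1) (ae_of_all _ fun x => (norm_expFun l x).le)⟩

lemma expFun_add_right (l x y : ℝ) : expFun l (x + y) = expFun l x * expFun l y := by
  rw [expFun, expFun, expFun, ← Complex.exp_add]; congr 1; push_cast; ring

lemma conj_expFun (l x : ℝ) : (starRingEnd ℂ) (expFun l x) = expFun (-l) x := by
  rw [expFun, expFun, ← Complex.exp_conj]
  congr 1
  simp only [map_mul, Complex.conj_ofReal, Complex.conj_I]
  push_cast; ring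

lemma conj_mul_expFun (l₁ l₂ x : ℝ) :
    (starRingEnd ℂ) (expFun l₁ x) * expFun l₂ x = expFun (l₂ - l₁) x := by
  rw [conj_expFun, expFun, expFun, expFun, ← Complex.exp_add]
  congr 1; push_cast; ring

lemma expFun_int (b m : ℤ) : expFun (b : ℝ) (m : ℝ) = 1 := by
  have h := Complex.exp_int_mul_two_pi_mul_I (-(b * m))
  rw [expFun, ← h]; congr 1; push_cast; ring

lemma uniformD_prob (A : Finset ℝ) (hA : A.Nonempty) : IsProbabilityMeasure (uniformD A) := by
  have hc : (A.card : ENNReal) ≠ 0 := by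
    exact_mod_cast Nat.cast_ne_zero.mpr (Finset.card_ne_zero.mpr hA)
  constructor
  rw [uniformD, Measure.smul_apply, Measure.finset_sum_apply]
  simp only [measure_univ, Finset.sum_const, nsmul_eq_mul, mul_one, smul_eq_mul]
  exact ENNReal.inv_mul_cancel hc (by simp)

lemma scaledB_prob (Bf : Finset ℤ) (c : ℝ) (hB : Bf.Nonempty) :
    IsProbabilityMeasure (scaledB Bf c) :=
  uniformD_prob _ (hB.image _)

lemma partialConv_prob (N : ℕ → ℕ) (B : ℕ → Finset ℤ) (hB : ∀ i, 1 ≤ i → (B i).Nonempty) :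
    ∀ k, IsProbabilityMeasure (partialConv N B k)
  | 0 => by simp only [partialConv]; infer_instance
  | k + 1 => by
    simp only [partialConv]
    haveI := partialConv_prob N B hB k
    haveI := scaledB_prob (B (k + 1)) (∏ i ∈ Finset.Icc 1 (k + 1), (N i : ℝ))
      (hB (k + 1) (Nat.le_add_left 1 k))
    infer_instance

set_option maxHeartbeats 2000000 in
lemma ft_eq_cos_sin (ρ : Measure ℝ) [IsFiniteMeasure ρ] (ξ : ℝ) :
    ft ρ ξ = (∫ x, Real.cos (-2 * Real.pi * ξ * x) ∂ρ : ℝ)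
      + (∫ x, Real.sin (-2 * Real.pi * ξ * x) ∂ρ : ℝ) * Complex.I := by
  have hcos : Continuous fun x : ℝ => Real.cos (-2 * Real.pi * ξ * x) := by fun_prop
  have hsin : Continuous fun x : ℝ => Real.sin (-2 * Real.pi * ξ * x) := by fun_prop
  have h1 : Integrable (fun x : ℝ => (Real.cos (-2 * Real.pi * ξ * x) : ℂ)) ρ := by
    have h0 : Integrable (fun x : ℝ => Real.cos (-2 * Real.pi * ξ * x)) ρ := by
      refine ⟨hcos.aestronglyMeasurable, ?_⟩
      exact HasFiniteIntegral.of_bounded (C := 1) (ae_of_all _ fun x => by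
        simpa using Real.abs_cos_le_one _)
    exact h0.ofReal
  have h2 : Integrable (fun x : ℝ => (Real.sin (-2 * Real.pi * ξ * x) : ℂ)) ρ := by
    have h0 : Integrable (fun x : ℝ => Real.sin (-2 * Real.pi * ξ * x)) ρ := by
      refine ⟨hsin.aestronglyMeasurable, ?_⟩
      exact HasFiniteIntegral.of_bounded (C := 1) (ae_of_all _ fun x => by
        simpa using Real.abs_sin_le_one _)
    exact h0.ofReal
  have hfun : ∀ x : ℝ, expFun ξ x = (Real.cos (-2 * Real.pi * ξ * x) : ℂ)
      + (Real.sin (-2 * Real.pi * ξ * x) : ℂ) * Complex.I := fun x => by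
    rw [expFun, Complex.exp_mul_I, Complex.ofReal_cos, Complex.ofReal_sin]
  rw [ft]
  simp_rw [hfun]
  rw [integral_add h1 (h2.mul_const Complex.I), integral_mul_const]
  congr 1
  · exact integral_ofReal
  · exact congrArg (· * Complex.I) integral_ofReal

set_option maxHeartbeats 1000000 in
lemma ft_tendsto {N : ℕ → ℕ} {B : ℕ → Finset ℤ} {μ' : Measure ℝ}
    (h : IsInfiniteConv N B μ') (hB : ∀ i, 1 ≤ i → (B i).Nonempty) (ξ : ℝ) :
    Filter.Tendsto (fun k => ft (partialConv N B k) ξ) atTop (𝓝 (ft μ' ξ)) := by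
  haveI := h.1
  have hcos : Continuous fun x : ℝ => Real.cos (-2 * Real.pi * ξ * x) := by fun_prop
  have hsin : Continuous fun x : ℝ => Real.sin (-2 * Real.pi * ξ * x) := by fun_prop
  set fc : BoundedContinuousFunction ℝ ℝ :=
    BoundedContinuousFunction.ofNormedAddCommGroup _ hcos 1
      (fun x => by simpa using Real.abs_cos_le_one _) with hfc
  set fs : BoundedContinuousFunction ℝ ℝ :=
    BoundedContinuousFunction.ofNormedAddCommGroup _ hsin 1
      (fun x => by simpa using Real.abs_sin_le_one _) with hfs
  have h1 := h.2 fc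
  have h2 := h.2 fs
  simp only [hfc, hfs, BoundedContinuousFunction.coe_ofNormedAddCommGroup] at h1 h2
  have hlim := ((Complex.continuous_ofReal.tendsto _).comp h1).add
    (((Complex.continuous_ofReal.tendsto _).comp h2).mul_const Complex.I)
  rw [ft_eq_cos_sin μ' ξ]
  refine Filter.Tendsto.congr (fun k => ?_) hlim
  haveI := partialConv_prob N B hB k
  exact (ft_eq_cos_sin (partialConv N B k) ξ).symm

lemma ft_conv (ρ σ : Measure ℝ) [IsFiniteMeasure ρ] [IsFiniteMeasure σ] (ξ : ℝ) :
    ft (ρ.conv σ) ξ = ft ρ ξ * ft σ ξ := by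
  have : ρ.conv σ = Measure.map (fun p : ℝ × ℝ => p.1 + p.2) (ρ.prod σ) := rfl
  rw [ft, this, integral_map (by fun_prop) ((expFun_continuous ξ).aestronglyMeasurable)]
  simp_rw [expFun_add_right]
  rw [integral_prod_mul]
  rfl

lemma ft_scaledB (Bf : Finset ℤ) (c : ℝ) (hc : c ≠ 0) (ξ : ℝ) :
    ft (scaledB Bf c) ξ = MB Bf (ξ / c) := by
  have hinj : Function.Injective fun b : ℤ => (b : ℝ) / c := fun a b h => by
    field_simp at h
    exact_mod_cast h
  have hInt : ∀ a ∈ Bf.image fun b : ℤ => (b : ℝ) / c,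
      Integrable (expFun ξ) (Measure.dirac a) := fun a _ => integrable_expFun _ ξ
  rw [ft, scaledB, uniformD, integral_smul_measure, integral_finset_sum_measure hInt]
  simp_rw [integral_dirac]
  rw [Finset.sum_image fun a _ b _ h => hinj h,
    Finset.card_image_of_injective _ hinj, MB]
  have hterm : ∀ b : ℤ, expFun ξ ((b : ℝ) / c) = expFun (b : ℝ) (ξ / c) := fun b => by
    rw [expFun, expFun]; congr 1; push_cast; ring
  simp_rw [hterm]
  rw [ENNReal.toReal_inv, ENNReal.toReal_natCast, Complex.real_smul]
  push_cast
  ring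

lemma ft_partialConv (N : ℕ → ℕ) (B : ℕ → Finset ℤ) (hB : ∀ i, 1 ≤ i → (B i).Nonempty)
    (hN : ∀ i, 1 ≤ i → (N i : ℝ) ≠ 0) :
    ∀ (k : ℕ) (ξ : ℝ), ft (partialConv N B k) ξ
      = ∏ i ∈ Finset.Icc 1 k, MB (B i) (ξ / ∏ j ∈ Finset.Icc 1 i, (N j : ℝ))
  | 0, ξ => by
    simp only [partialConv]
    rw [ft, integral_dirac]
    simp [expFun]
  | k + 1, ξ => by
    simp only [partialConv]
    haveI := partialConv_prob N B hB k
    haveI := scaledB_prob (B (k + 1)) (∏ i ∈ Finset.Icc 1 (k + 1), (N i : ℝ))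
      (hB (k + 1) (Nat.le_add_left 1 k))
    rw [ft_conv, ft_partialConv N B hB hN k ξ,
      ft_scaledB _ _ (Finset.prod_ne_zero_iff.mpr fun i hi => hN i (Finset.mem_Icc.mp hi).1) ξ,
      Finset.prod_Icc_succ_top (Nat.le_add_left 1 k)
        (fun i => MB (B i) (ξ / ∏ j ∈ Finset.Icc 1 i, (N j : ℝ)))]

lemma prod_Icc_shift {G : Type*} [CommMonoid G] (f : ℕ → G) (k : ℕ) :
    ∏ i ∈ Finset.Icc 1 (k + 1), f i = f 1 * ∏ i ∈ Finset.Icc 1 k, f (1 + i) := by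
  have h : ∀ (n : ℕ) (g : ℕ → G),
      ∏ i ∈ Finset.Icc 1 n, g i = ∏ i ∈ Finset.range n, g (1 + i) := by
    intro n g
    rw [← Finset.Ico_add_one_right_eq_Icc, Finset.prod_Ico_eq_prod_range]
    simp
  rw [h (k + 1) f, h k fun i => f (1 + i), Finset.prod_range_succ', mul_comm]
  congr 1
  exact Finset.prod_congr rfl fun i _ => by rw [show 1 + (i + 1) = 1 + (1 + i) by omega]

lemma MB_int (Bf : Finset ℤ) (hBf : Bf.Nonempty) (m : ℤ) : MB Bf ((m : ℤ) : ℝ) = 1 := by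
  rw [MB, Finset.sum_congr rfl fun b _ => expFun_int b m, Finset.sum_const, nsmul_eq_mul,
    mul_one, inv_mul_cancel₀]
  exact_mod_cast Nat.cast_ne_zero.mpr (Finset.card_ne_zero.mpr hBf)

lemma ft_shift (N : ℕ → ℕ) (B : ℕ → Finset ℤ) {μ' ν' : Measure ℝ}
    (hB : ∀ i, 1 ≤ i → (B i).Nonempty) (hN : ∀ i, 1 ≤ i → (N i : ℝ) ≠ 0)
    (hμ : IsInfiniteConv N B μ') (hν : IsNuGt N B 1 ν') (m : ℤ) :
    ft ν' (m : ℝ) = ft μ' ((N 1 : ℝ) * (m : ℝ)) := by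
  have hB' : ∀ i, 1 ≤ i → ((fun j => B (1 + j)) i).Nonempty := fun i hi => hB (1 + i) (by omega)
  have hN' : ∀ i, 1 ≤ i → (((fun j => N (1 + j)) i : ℕ) : ℝ) ≠ 0 := fun i hi =>
    hN (1 + i) (by omega)
  have h1 := ft_tendsto hμ hB ((N 1 : ℝ) * m)
  have h2 := ft_tendsto hν hB' (m : ℝ)
  have heq : ∀ k, ft (partialConv N B (k + 1)) ((N 1 : ℝ) * m)
      = ft (partialConv (fun j => N (1 + j)) (fun j => B (1 + j)) k) (m : ℝ) := by
    intro k
    rw [ft_partialConv N B hB hN, ft_partialConv _ _ hB' hN',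
      prod_Icc_shift (fun i => MB (B i) ((N 1 : ℝ) * m / ∏ j ∈ Finset.Icc 1 i, (N j : ℝ))) k]
    have h1eq : MB (B 1) ((N 1 : ℝ) * m / ∏ j ∈ Finset.Icc 1 1, (N j : ℝ)) = 1 := by
      rw [Finset.Icc_self, Finset.prod_singleton, mul_div_cancel_left₀ _ (hN 1 le_rfl)]
      exact MB_int (B 1) (hB 1 le_rfl) m
    rw [h1eq, one_mul]
    refine Finset.prod_congr rfl fun i hi => ?_
    congr 1
    rw [show (1 + i) = i + 1 by omega, prod_Icc_shift (fun j => (N j : ℝ)) i,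
      mul_div_mul_left _ _ (hN 1 le_rfl)]
  have h1' := h1.comp (Filter.tendsto_add_atTop_nat 1)
  exact tendsto_nhds_unique h2 (h1'.congr heq)

end AuxStmt13

theorem stmt13
    (N M : ℕ → ℕ) (B : ℕ → Finset ℤ) (μ : Measure ℝ) (ν : ℕ → Measure ℝ)
    (hM : ∀ k ≥ 1, 2 ≤ M k) (hMN : ∀ k ≥ 1, M k ≤ N k)
    (hCRS : ∀ k ≥ 1, IsCRS (B k) (M k))
    (hUDZ : ∀ k ≥ 1, SatisfiesUDZ (B k) (M k))
    (hμ : IsInfiniteConv N B μ)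
    (hν : ∀ k ≥ 1, IsNuGt N B k (ν k))
    (htight : IsTightFamily fun k => ν (k + 1))
    (Λ : Set ℝ) (hΛ : IsSpectralPair μ Λ) (h0 : (0 : ℝ) ∈ Λ) :
    ∀ γ : ℝ, (∃ q : ℚ, γ = (q : ℝ)) → 0 ≤ γ → γ < (N 1 : ℝ) →
      Pset Λ (N 1) γ = ∅ ∨ IsOrthoSet (ν 1) (((↑) : ℤ → ℝ) '' Pset Λ (N 1) γ) := by
  intro γ _ _ _
  right
  haveI := hμ.1
  have hν1 : IsNuGt N B 1 (ν 1) := hν 1 le_rfl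
  haveI : IsProbabilityMeasure (ν 1) := hν1.1
  have hBne : ∀ i, 1 ≤ i → (B i).Nonempty := fun i hi => by
    obtain ⟨b, hb, -⟩ := (hCRS i hi 0).exists
    exact ⟨b, hb⟩
  have hNne : ∀ i, 1 ≤ i → (N i : ℝ) ≠ 0 := fun i hi => by
    have h2 := hM i hi
    have h3 := hMN i hi
    have : (0 : ℕ) < N i := by omega
    exact_mod_cast this.ne'
  rintro l₁ ⟨ω₁, hω₁, rfl⟩ l₂ ⟨ω₂, hω₂, rfl⟩
  have hint : ∀ x, (starRingEnd ℂ) (expFun (ω₁ : ℝ) x) * expFun (ω₂ : ℝ) x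
      = expFun (((ω₂ - ω₁ : ℤ) : ℝ)) x := fun x => by
    rw [conj_mul_expFun]
    congr 1
    push_cast
    ring
  by_cases h : ω₁ = ω₂
  · subst h
    rw [if_pos rfl]
    simp_rw [hint, sub_self]
    simp [expFun]
  · rw [if_neg (by exact_mod_cast h)]
    have hω₁Λ : γ + (N 1 : ℝ) * ω₁ ∈ Λ := hω₁
    have hω₂Λ : γ + (N 1 : ℝ) * ω₂ ∈ Λ := hω₂
    have hne : γ + (N 1 : ℝ) * ω₁ ≠ γ + (N 1 : ℝ) * ω₂ := by
      intro hcontr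
      apply h
      have hmul : (N 1 : ℝ) * ω₁ = (N 1 : ℝ) * ω₂ := by linarith
      exact_mod_cast mul_left_cancel₀ (hNne 1 le_rfl) hmul
    have horth := hΛ.1 _ hω₁Λ _ hω₂Λ
    rw [if_neg hne] at horth
    have hftμ : ft μ ((N 1 : ℝ) * ((ω₂ - ω₁ : ℤ) : ℝ)) = 0 := by
      rw [ft, ← horth]
      refine integral_congr_ae (ae_of_all _ fun x => ?_)
      simp only [conj_mul_expFun]
      congr 1
      push_cast
      ring
    have hkey := ft_shift N B hBne hNne hμ hν1 (ω₂ - ω₁)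
    calc (∫ x, (starRingEnd ℂ) (expFun (ω₁ : ℝ) x) * expFun (ω₂ : ℝ) x ∂(ν 1))
        = ft (ν 1) (((ω₂ - ω₁ : ℤ) : ℝ)) :=
          integral_congr_ae (ae_of_all _ fun x => hint x)
      _ = 0 := by rw [hkey, hftμ]
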